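/- Let B be a finite simple connected bipartite graph and B′ ⊆ B a connected subgraph. Then λ(B′) ≤ λ(B), where λ denotes the recession connectivity. -/

import Mathlib

/-! Scaffolding for bipartite graphs given by edge sets `B : Finset (L × R)`,
their recession graphs, and the recession connectivity `λ`. -/

variable {L R : Type*}

/-- The undirected simple graph on `L ⊕ R` determined by an edge set `S ⊆ L × R`. -/
def sgraph (S : Finset (L × R)) : SimpleGraph (L ⊕ R) where
  Adj v w := (∃ e ∈ S, v = Sum.inl e.1 ∧ w = Sum.inr e.2) ∨
             (∃ e ∈ S, w = Sum.inl e.1 ∧ v = Sum.inr e.2)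
  symm := by
    constructor
    rintro v w (⟨e, he, h1, h2⟩ | ⟨e, he, h1, h2⟩)
    · exact Or.inr ⟨e, he, h1, h2⟩
    · exact Or.inl ⟨e, he, h1, h2⟩
  loopless := by
    constructor
    rintro v (⟨e, _, h1, h2⟩ | ⟨e, _, h1, h2⟩) <;> subst h1 <;> simp_all

/-- A vertex is incident to the edge set `B` if it is an endpoint of one of its edges. -/
def incid (B : Finset (L × R)) (v : L ⊕ R) : Prop :=
  ∃ e ∈ B, v = Sum.inl e.1 ∨ v = Sum.inr e.2

/-- The arcs of the recession graph `R(S; B)`: every edge of `B` gives an arc from its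
`L`-endpoint to its `R`-endpoint, and every edge of `S` additionally gives the reverse arc. -/
def recArc (S B : Finset (L × R)) (v w : L ⊕ R) : Prop :=
  (∃ e ∈ B, v = Sum.inl e.1 ∧ w = Sum.inr e.2) ∨
  (∃ e ∈ S, w = Sum.inl e.1 ∧ v = Sum.inr e.2)

/-- The recession graph `R(S; B)` is strongly connected: every vertex of `B` reaches
every other vertex of `B` by a directed path. -/
def RecStrong (S B : Finset (L × R)) : Prop :=
  ∀ v w, incid B v → incid B w → Relation.ReflTransGen (recArc S B) v w

/-- The number of connected components of (the graph of) `S` containing at least one edge. -/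
noncomputable def numComp (S : Finset (L × R)) : ℕ :=
  Set.ncard {C : (sgraph S).ConnectedComponent |
    ∃ e ∈ S, C = (sgraph S).connectedComponentMk (Sum.inl e.1)}

/-- The recession connectivity `λ(B)`:  the maximum number of connected components of a
subgraph `S ⊆ B` for which the recession graph `R(S; B)` is strongly connected. -/
noncomputable def recConn (B : Finset (L × R)) : ℕ :=
  sSup {m | ∃ S ⊆ B, RecStrong S B ∧ numComp S = m}

/-- The graph of the edge set `B` is connected (on its own vertex set). -/
def ConnectedOn (B : Finset (L × R)) : Prop :=
  B.Nonempty ∧ ∀ v w, incid B v → incid B w → (sgraph B).Reachable v w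


section Aux

open scoped Classical

variable {L R : Type*}

lemma incid_mono {B B' : Finset (L × R)} (h : B ⊆ B') {v : L ⊕ R} :
    incid B v → incid B' v := by
  rintro ⟨e, he, hv⟩; exact ⟨e, h he, hv⟩

lemma sgraph_mono {S S' : Finset (L × R)} (h : S ⊆ S') : sgraph S ≤ sgraph S' := by
  rintro v w (⟨e, he, h1, h2⟩ | ⟨e, he, h1, h2⟩)
  · exact Or.inl ⟨e, h he, h1, h2⟩
  · exact Or.inr ⟨e, h he, h1, h2⟩

lemma recArc_mono {S B S' B' : Finset (L × R)} (hS : S ⊆ S') (hB : B ⊆ B') {v w : L ⊕ R} :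
    recArc S B v w → recArc S' B' v w := by
  rintro (⟨e, he, h1, h2⟩ | ⟨e, he, h1, h2⟩)
  · exact Or.inl ⟨e, hB he, h1, h2⟩
  · exact Or.inr ⟨e, hS he, h1, h2⟩

lemma numComp_eq_image (S : Finset (L × R)) :
    numComp S = ((fun e : L × R => (sgraph S).connectedComponentMk (Sum.inl e.1)) '' ↑S).ncard := by
  unfold numComp
  congr 1
  ext C
  constructor
  · rintro ⟨e, he, rfl⟩; exact ⟨e, he, rfl⟩
  · rintro ⟨e, he, rfl⟩; exact ⟨e, he, rfl⟩

lemma numComp_le_card (S : Finset (L × R)) : numComp S ≤ S.card := by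
  rw [numComp_eq_image]
  calc ((fun e : L × R => (sgraph S).connectedComponentMk (Sum.inl e.1)) '' ↑S).ncard
      ≤ (↑S : Set (L × R)).ncard := Set.ncard_image_le S.finite_toSet
    _ = S.card := Set.ncard_coe_finset S

lemma recConn_bdd (B : Finset (L × R)) :
    BddAbove {m | ∃ S ⊆ B, RecStrong S B ∧ numComp S = m} := by
  refine ⟨B.card, ?_⟩
  rintro m ⟨S, hS, _, rfl⟩
  exact (numComp_le_card S).trans (Finset.card_le_card hS)

/-- Transfer of reachability from `sgraph (insert e S)` back to `sgraph S`, when one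
endpoint `u` of `e` is not incident to `S` (so `e` is a pendant edge); `F` collapses
`u` to the other endpoint `t`. -/
lemma reach_transfer {S : Finset (L × R)} {e : L × R} {u t : L ⊕ R} (F : L ⊕ R → L ⊕ R)
    (hu : ¬ incid S u)
    (hut : (u = Sum.inl e.1 ∧ t = Sum.inr e.2) ∨ (u = Sum.inr e.2 ∧ t = Sum.inl e.1))
    (hFu : F u = t) (hF : ∀ x, x ≠ u → F x = x)
    {v w : L ⊕ R} (h : (sgraph (insert e S)).Reachable v w) :
    (sgraph S).Reachable (F v) (F w) := by
  rw [SimpleGraph.reachable_iff_reflTransGen] at h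
  rw [SimpleGraph.reachable_iff_reflTransGen]
  refine Relation.ReflTransGen.lift' F ?_ _ _ h
  intro a b hab
  have key : ∀ x y : L ⊕ R, (∃ e' ∈ insert e S, x = Sum.inl e'.1 ∧ y = Sum.inr e'.2) →
      Relation.ReflTransGen (sgraph S).Adj (F x) (F y) := by
    rintro x y ⟨e', he', rfl, rfl⟩
    rcases Finset.mem_insert.mp he' with rfl | he'
    · -- the special edge
      rcases hut with ⟨hu1, ht1⟩ | ⟨hu1, ht1⟩
      · have hx : F (Sum.inl e'.1) = t := by rw [← hu1, hFu]
        have hy : F (Sum.inr e'.2) = t := by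
          rw [hF _ (by rw [hu1]; simp), ht1]
        rw [hx, hy]
      · have hy : F (Sum.inr e'.2) = t := by rw [← hu1, hFu]
        have hx : F (Sum.inl e'.1) = t := by
          rw [hF _ (by rw [hu1]; simp), ht1]
        rw [hx, hy]
    · -- an edge of S
      have hx : Sum.inl e'.1 ≠ u := fun h => hu (h ▸ ⟨e', he', Or.inl rfl⟩)
      have hy : Sum.inr e'.2 ≠ u := fun h => hu (h ▸ ⟨e', he', Or.inr rfl⟩)
      rw [hF _ hx, hF _ hy]
      exact Relation.ReflTransGen.single (Or.inl ⟨e', he', rfl, rfl⟩)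
  rcases hab with h' | h'
  · exact key a b h'
  · exact Relation.ReflTransGen.mono
      (fun x y hxy => hxy.symm) _ _ (Relation.reflTransGen_swap.mpr (key b a h'))

lemma numComp_le_insert {S : Finset (L × R)} {e : L × R} {u t : L ⊕ R}
    (hu : ¬ incid S u)
    (hut : (u = Sum.inl e.1 ∧ t = Sum.inr e.2) ∨ (u = Sum.inr e.2 ∧ t = Sum.inl e.1)) :
    numComp S ≤ numComp (insert e S) := by
  classical
  rw [numComp_eq_image, numComp_eq_image]
  have hle : sgraph S ≤ sgraph (insert e S) := sgraph_mono (Finset.subset_insert e S)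
  refine Set.ncard_le_ncard_of_injOn
    (SimpleGraph.ConnectedComponent.map (SimpleGraph.Hom.ofLE hle)) ?_ ?_
    ((insert e S).finite_toSet.image _)
  · rintro C ⟨e', he', rfl⟩
    exact ⟨e', Finset.mem_insert_of_mem he', rfl⟩
  · rintro C ⟨e1, he1, rfl⟩ C' ⟨e2, he2, rfl⟩ hmap
    simp only [SimpleGraph.ConnectedComponent.map_mk] at hmap
    have hr : (sgraph (insert e S)).Reachable (Sum.inl e1.1) (Sum.inl e2.1) :=
      SimpleGraph.ConnectedComponent.exact hmap
    set F : L ⊕ R → L ⊕ R := fun x => if x = u then t else x with hFdef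
    have h1 : Sum.inl e1.1 ≠ u := fun h => hu (h ▸ ⟨e1, he1, Or.inl rfl⟩)
    have h2 : Sum.inl e2.1 ≠ u := fun h => hu (h ▸ ⟨e2, he2, Or.inl rfl⟩)
    have := reach_transfer F hu hut (by simp [hFdef]) (fun x hx => by simp [hFdef, hx]) hr
    rw [hFdef] at this
    simp only [if_neg h1, if_neg h2] at this
    exact SimpleGraph.ConnectedComponent.sound this

lemma recStrong_insert_same {S B : Finset (L × R)} {e : L × R} (h : RecStrong S B)
    (hl : incid B (Sum.inl e.1)) (hr : incid B (Sum.inr e.2)) :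
    RecStrong S (insert e B) := by
  intro v w hv hw
  have key : ∀ x, incid (insert e B) x → incid B x := by
    rintro x ⟨e', he', hx⟩
    rcases Finset.mem_insert.mp he' with rfl | he'
    · rcases hx with rfl | rfl
      exacts [hl, hr]
    · exact ⟨e', he', hx⟩
  exact Relation.ReflTransGen.mono
    (fun a b => recArc_mono (Finset.Subset.refl S) (Finset.subset_insert e B)) _ _ (h v w (key v hv) (key w hw))

lemma recStrong_insert_new {S B : Finset (L × R)} {e : L × R} {u t : L ⊕ R}
    (h : RecStrong S B)
    (hut : (u = Sum.inl e.1 ∧ t = Sum.inr e.2) ∨ (u = Sum.inr e.2 ∧ t = Sum.inl e.1))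
    (ht : incid B t) :
    RecStrong (insert e S) (insert e B) := by
  have harc1 : recArc (insert e S) (insert e B) u t := by
    rcases hut with ⟨hu1, ht1⟩ | ⟨hu1, ht1⟩
    · exact Or.inl ⟨e, Finset.mem_insert_self e B, hu1, ht1⟩
    · exact Or.inr ⟨e, Finset.mem_insert_self e S, ht1, hu1⟩
  have harc2 : recArc (insert e S) (insert e B) t u := by
    rcases hut with ⟨hu1, ht1⟩ | ⟨hu1, ht1⟩
    · exact Or.inr ⟨e, Finset.mem_insert_self e S, hu1, ht1⟩
    · exact Or.inl ⟨e, Finset.mem_insert_self e B, ht1, hu1⟩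
  have key : ∀ x, incid (insert e B) x → incid B x ∨ x = u := by
    rintro x ⟨e', he', hx⟩
    rcases Finset.mem_insert.mp he' with rfl | he'
    · rcases hut with ⟨hu1, ht1⟩ | ⟨hu1, ht1⟩
      · rcases hx with rfl | rfl
        · exact Or.inr hu1.symm
        · exact Or.inl (ht1 ▸ ht)
      · rcases hx with rfl | rfl
        · exact Or.inl (ht1 ▸ ht)
        · exact Or.inr hu1.symm
    · exact Or.inl ⟨e', he', hx⟩
  have lift : ∀ a b, incid B a → incid B b →
      Relation.ReflTransGen (recArc (insert e S) (insert e B)) a b :=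
    fun a b ha hb => Relation.ReflTransGen.mono
      (fun x y => recArc_mono (Finset.subset_insert e S) (Finset.subset_insert e B)) _ _ (h a b ha hb)
  intro v w hv hw
  rcases key v hv with hv' | rfl
  · rcases key w hw with hw' | rfl
    · exact lift v w hv' hw'
    · exact (lift v t hv' ht).tail harc2
  · rcases key w hw with hw' | rfl
    · exact (Relation.ReflTransGen.single harc1).trans (lift t w ht hw')
    · exact Relation.ReflTransGen.refl

lemma recConn_le_insert {B : Finset (L × R)} {e : L × R}
    (hts : incid B (Sum.inl e.1) ∨ incid B (Sum.inr e.2)) :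
    recConn B ≤ recConn (insert e B) := by
  unfold recConn
  rcases Set.eq_empty_or_nonempty {m | ∃ S ⊆ B, RecStrong S B ∧ numComp S = m} with hemp | hne
  · rw [hemp, csSup_empty]
    exact bot_le
  · refine csSup_le hne ?_
    rintro m ⟨S, hSB, hstrong, rfl⟩
    by_cases hboth : incid B (Sum.inl e.1) ∧ incid B (Sum.inr e.2)
    · refine le_csSup (recConn_bdd _) ?_
      exact ⟨S, hSB.trans (Finset.subset_insert e B), recStrong_insert_same hstrong hboth.1 hboth.2, rfl⟩
    · -- exactly one endpoint incident
      have hcase : (¬ incid B (Sum.inl e.1) ∧ incid B (Sum.inr e.2)) ∨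
          (¬ incid B (Sum.inr e.2) ∧ incid B (Sum.inl e.1)) := by
        tauto
      rcases hcase with ⟨hnotu, hti⟩ | ⟨hnotu, hti⟩
      · have hut : ((Sum.inl e.1 : L ⊕ R) = Sum.inl e.1 ∧ (Sum.inr e.2 : L ⊕ R) = Sum.inr e.2) ∨
            ((Sum.inl e.1 : L ⊕ R) = Sum.inr e.2 ∧ (Sum.inr e.2 : L ⊕ R) = Sum.inl e.1) :=
          Or.inl ⟨rfl, rfl⟩
        have huS : ¬ incid S (Sum.inl e.1) := fun hx => hnotu (incid_mono hSB hx)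
        refine le_csSup_of_le (recConn_bdd _)
          ⟨insert e S, Finset.insert_subset_insert e hSB,
            recStrong_insert_new hstrong hut hti, rfl⟩ ?_
        exact numComp_le_insert huS hut
      · have hut : ((Sum.inr e.2 : L ⊕ R) = Sum.inl e.1 ∧ (Sum.inl e.1 : L ⊕ R) = Sum.inr e.2) ∨
            ((Sum.inr e.2 : L ⊕ R) = Sum.inr e.2 ∧ (Sum.inl e.1 : L ⊕ R) = Sum.inl e.1) :=
          Or.inr ⟨rfl, rfl⟩
        have huS : ¬ incid S (Sum.inr e.2) := fun hx => hnotu (incid_mono hSB hx)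
        refine le_csSup_of_le (recConn_bdd _)
          ⟨insert e S, Finset.insert_subset_insert e hSB,
            recStrong_insert_new hstrong hut hti, rfl⟩ ?_
        exact numComp_le_insert huS hut

lemma exists_crossing {B B' : Finset (L × R)} (hsub : B' ⊆ B) (hB : ConnectedOn B)
    (hne : B'.Nonempty) (hproper : B' ≠ B) :
    ∃ e ∈ B, e ∉ B' ∧ (incid B' (Sum.inl e.1) ∨ incid B' (Sum.inr e.2)) := by
  obtain ⟨e0, he0B, he0⟩ : ∃ e0 ∈ B, e0 ∉ B' := by
    by_contra hcon
    push_neg at hcon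
    exact hproper (Finset.Subset.antisymm hsub hcon)
  obtain ⟨f0, hf0⟩ := hne
  by_cases hstart : incid B' (Sum.inl e0.1) ∨ incid B' (Sum.inr e0.2)
  · exact ⟨e0, he0B, he0, hstart⟩
  · have h1 : incid B (Sum.inl e0.1) := ⟨e0, he0B, Or.inl rfl⟩
    have h2 : incid B (Sum.inl f0.1) := ⟨f0, hsub hf0, Or.inl rfl⟩
    have hreach := hB.2 _ _ h1 h2
    rw [SimpleGraph.reachable_iff_reflTransGen] at hreach
    have hP2 : incid B' (Sum.inl f0.1) := ⟨f0, hf0, Or.inl rfl⟩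
    have hP1 : ¬ incid B' (Sum.inl e0.1) := fun hx => hstart (Or.inl hx)
    have cross : ∀ {x : L ⊕ R} (_ : Relation.ReflTransGen (sgraph B).Adj x (Sum.inl f0.1)),
        ¬ incid B' x →
        ∃ a b : L ⊕ R, (sgraph B).Adj a b ∧ ¬ incid B' a ∧ incid B' b := by
      intro x hx
      induction hx using Relation.ReflTransGen.head_induction_on with
      | refl => intro hcon; exact absurd hP2 hcon
      | @head a c hadj hrest ih =>
        intro hna
        by_cases hc : incid B' c
        · exact ⟨a, c, hadj, hna, hc⟩
        · exact ih hc
    obtain ⟨a, b, hadj, hna, hb⟩ := cross hreach hP1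
    rcases hadj with ⟨e', he', h1', h2'⟩ | ⟨e', he', h1', h2'⟩
    · refine ⟨e', he', ?_, ?_⟩
      · intro hmem
        exact hna (h1' ▸ ⟨e', hmem, Or.inl rfl⟩)
      · exact Or.inr (h2' ▸ hb)
    · refine ⟨e', he', ?_, ?_⟩
      · intro hmem
        exact hna (h2' ▸ ⟨e', hmem, Or.inr rfl⟩)
      · exact Or.inl (h1' ▸ hb)

lemma connectedOn_insert {B' : Finset (L × R)} {e : L × R} (hB' : ConnectedOn B')
    (hts : incid B' (Sum.inl e.1) ∨ incid B' (Sum.inr e.2)) :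
    ConnectedOn (insert e B') := by
  refine ⟨⟨e, Finset.mem_insert_self _ _⟩, ?_⟩
  have hadj : (sgraph (insert e B')).Adj (Sum.inl e.1) (Sum.inr e.2) :=
    Or.inl ⟨e, Finset.mem_insert_self _ _, rfl, rfl⟩
  have key : ∀ x, incid (insert e B') x →
      ∃ x', incid B' x' ∧ (sgraph (insert e B')).Reachable x x' := by
    rintro x ⟨e', he', hx⟩
    rcases Finset.mem_insert.mp he' with rfl | he'
    · rcases hts with h | h
      · rcases hx with rfl | rfl
        · exact ⟨_, h, SimpleGraph.Reachable.refl _⟩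
        · exact ⟨_, h, hadj.symm.reachable⟩
      · rcases hx with rfl | rfl
        · exact ⟨_, h, hadj.reachable⟩
        · exact ⟨_, h, SimpleGraph.Reachable.refl _⟩
    · exact ⟨x, ⟨e', he', hx⟩, SimpleGraph.Reachable.refl _⟩
  intro v w hv hw
  obtain ⟨v', hv', hvr⟩ := key v hv
  obtain ⟨w', hw', hwr⟩ := key w hw
  exact hvr.trans (((hB'.2 v' w' hv' hw').mono
    (sgraph_mono (Finset.subset_insert _ _))).trans hwr.symm)

end Aux

/-- If `B` is a finite simple connected bipartite graph and `B' ⊆ B` a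
connected subgraph, then `λ(B') ≤ λ(B)`. -/
theorem recConn_mono {L R : Type*} (B B' : Finset (L × R)) (hsub : B' ⊆ B)
    (hB : ConnectedOn B) (hB' : ConnectedOn B') : recConn B' ≤ recConn B := by
  
  classical
  have key : ∀ (n : ℕ) (B₀ : Finset (L × R)), (B \ B₀).card = n → B₀ ⊆ B → ConnectedOn B₀ →
      recConn B₀ ≤ recConn B := by
    intro n
    induction n using Nat.strong_induction_on with
    | _ n ih =>
      intro B₀ hn hsub₀ hB₀
      by_cases heq : B₀ = B
      · subst heq; exact le_rfl
      · obtain ⟨e, heB, heB₀, hts⟩ := exists_crossing hsub₀ hB hB₀.1 heq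
        have hmeas : (B \ insert e B₀).card < n := by
          subst hn
          have hset : B \ insert e B₀ = (B \ B₀).erase e := by
            ext x
            simp only [Finset.mem_sdiff, Finset.mem_erase, Finset.mem_insert, not_or]
            tauto
          rw [hset]
          exact Finset.card_erase_lt_of_mem (Finset.mem_sdiff.mpr ⟨heB, heB₀⟩)
        exact (recConn_le_insert hts).trans
          (ih _ hmeas (insert e B₀) rfl (Finset.insert_subset heB hsub₀)
            (connectedOn_insert hB₀ hts))
  exact key _ B' rfl hsub hB'
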